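/- Let k ≥ 1, ℓ ∈ ℝ^k, μ_i > 0 and θ_i ≥ 0 for i = 1,…,k, x ∈ ℝ^k, and let w : [0,∞) → ℝ^k be continuous with w(0) = 0. Let X : [0,∞) → ℝ^k be continuous and Ψ : [0,∞) → ℝ^k be locally integrable with Ψ_i(t) ≤ X_i(t) for all i and t, and Σ_i Ψ_i(t) = min(0, Σ_i X_i(t)) for all t, and suppose X_i(t) = x_i + w_i(t) + ∫₀ᵗ [ −θ_i X_i(s) − (μ_i − θ_i) Ψ_i(s) + ℓ_i ] ds for all i and t. Let Υ be the unique continuous solution of Υ_i(t) = x_i + w_i(t) + ∫₀ᵗ (−μ_i Υ_i(s) + ℓ_i) ds. Then there is a constant c > 0, depending only on k, μ, θ and ℓ (not on x, w or t), such that ‖X(t)‖ ≤ c [ ‖x‖ + ‖w(t)‖ + t + ∫₀ᵗ ‖Υ(s)‖ ds + ‖Υ(t)‖ ] for all t ≥ 0. -/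

import Mathlib

open Set MeasureTheory

noncomputable def l1 {k : ℕ} (x : Fin k → ℝ) : ℝ := ∑ i, |x i|

private lemma exp_integral (c u r : ℝ) :
    ∫ s in u..r, c * Real.exp (c * s) = Real.exp (c * r) - Real.exp (c * u) := by
  have h : ∀ s ∈ uIcc u r, HasDerivAt (fun y => Real.exp (c * y)) (c * Real.exp (c * s)) s := by
    intro s _
    have := ((hasDerivAt_id s).const_mul c).exp
    simpa [mul_comm] using this
  have hint : IntervalIntegrable (fun s => c * Real.exp (c * s)) volume u r :=
    (continuous_const.mul (Real.continuous_exp.comp (continuous_const.mul continuous_id))).intervalIntegrable u r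
  exact intervalIntegral.integral_eq_sub_of_hasDerivAt h hint

/-- Fubini on a triangle: swap the order of integration. -/
private lemma tri_swap {f φ : ℝ → ℝ} {t : ℝ} (ht : 0 ≤ t)
    (hf : IntegrableOn f (Ioc 0 t)) (hφ : Continuous φ) :
    ∫ s in Ioc (0:ℝ) t, (∫ u in Ioc (0:ℝ) s, f u) * φ s
      = ∫ u in Ioc (0:ℝ) t, f u * (∫ s in Ioc u t, φ s) := by
  obtain ⟨C, hC⟩ : ∃ C, ∀ s ∈ Icc (0:ℝ) t, ‖φ s‖ ≤ C :=
    isCompact_Icc.exists_bound_of_continuousOn hφ.continuousOn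
  set H : ℝ → ℝ → ℝ := fun s u => ({p : ℝ × ℝ | p.2 ≤ p.1}.indicator
      (fun p => f p.2 * φ p.1)) (s, u) with hH
  have hmeas : MeasurableSet {p : ℝ × ℝ | p.2 ≤ p.1} :=
    measurableSet_le measurable_snd measurable_fst
  have hprodmeas :
      (volume.restrict (Ioc (0:ℝ) t)).prod (volume.restrict (Ioc (0:ℝ) t))
        = (volume.prod volume).restrict ((Ioc (0:ℝ) t) ×ˢ (Ioc (0:ℝ) t)) :=
    Measure.prod_restrict _ _
  haveI hfin : IsFiniteMeasure (volume.restrict (Ioc (0:ℝ) t)) := by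
    constructor
    rw [Measure.restrict_apply_univ]
    exact measure_Ioc_lt_top
  have hsm : AEStronglyMeasurable (Function.uncurry H)
      ((volume.restrict (Ioc (0:ℝ) t)).prod (volume.restrict (Ioc (0:ℝ) t))) := by
    have hbase : AEStronglyMeasurable (fun p : ℝ × ℝ => f p.2 * φ p.1)
        ((volume.restrict (Ioc (0:ℝ) t)).prod (volume.restrict (Ioc (0:ℝ) t))) := by
      have h1 : AEStronglyMeasurable (fun p : ℝ × ℝ => f p.2)
          ((volume.restrict (Ioc (0:ℝ) t)).prod (volume.restrict (Ioc (0:ℝ) t))) :=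
        hf.aestronglyMeasurable.comp_snd
      exact h1.mul (hφ.comp continuous_fst).aestronglyMeasurable
    have : Function.uncurry H = {p : ℝ × ℝ | p.2 ≤ p.1}.indicator
        (fun p => f p.2 * φ p.1) := by
      funext p
      simp [hH, Function.uncurry]
    rw [this]
    exact hbase.indicator hmeas
  have hint : Integrable (Function.uncurry H)
      ((volume.restrict (Ioc (0:ℝ) t)).prod (volume.restrict (Ioc (0:ℝ) t))) := by
    have hg : Integrable (fun p : ℝ × ℝ => C * |f p.2|)
        ((volume.restrict (Ioc (0:ℝ) t)).prod (volume.restrict (Ioc (0:ℝ) t))) :=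
      Integrable.mul_prod (integrable_const C) hf.abs
    refine hg.mono hsm ?_
    rw [hprodmeas]
    filter_upwards [ae_restrict_mem (measurableSet_Ioc.prod measurableSet_Ioc)] with p hp
    have hp1 : p.1 ∈ Ioc (0:ℝ) t := hp.1
    have hφb : |φ p.1| ≤ C := hC p.1 ⟨hp1.1.le, hp1.2⟩
    by_cases hps : p ∈ {p : ℝ × ℝ | p.2 ≤ p.1}
    · have : Function.uncurry H p = f p.2 * φ p.1 := by
        simp [hH, Function.uncurry, Set.indicator_of_mem hps]
      rw [this]
      have h1 : ‖f p.2 * φ p.1‖ = |f p.2| * |φ p.1| := abs_mul _ _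
      have h2 : |f p.2| * |φ p.1| ≤ |f p.2| * C :=
        mul_le_mul_of_nonneg_left hφb (abs_nonneg _)
      have h3 : |f p.2| * C ≤ ‖C * |f p.2|‖ := by
        rw [Real.norm_eq_abs, abs_mul, abs_abs]
        nlinarith [abs_nonneg (f p.2), le_abs_self C]
      calc ‖f p.2 * φ p.1‖ = |f p.2| * |φ p.1| := h1
        _ ≤ |f p.2| * C := h2
        _ ≤ ‖C * |f p.2|‖ := h3
    · have : Function.uncurry H p = 0 := by
        simp [hH, Function.uncurry, Set.indicator_of_notMem hps]
      rw [this, Real.norm_eq_abs, Real.norm_eq_abs, abs_zero, abs_mul, abs_abs]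
      positivity
  have hswap : ∫ s in Ioc (0:ℝ) t, ∫ u in Ioc (0:ℝ) t, H s u
      = ∫ u in Ioc (0:ℝ) t, ∫ s in Ioc (0:ℝ) t, H s u :=
    MeasureTheory.integral_integral_swap hint
  have hL : ∫ s in Ioc (0:ℝ) t, (∫ u in Ioc (0:ℝ) s, f u) * φ s
      = ∫ s in Ioc (0:ℝ) t, ∫ u in Ioc (0:ℝ) t, H s u := by
    refine setIntegral_congr_fun measurableSet_Ioc (fun s hs => ?_)
    have h1 : ∀ u, H s u = (Iic s).indicator (fun u => f u * φ s) u := by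
      intro u
      by_cases h : u ≤ s
      · simp [hH, Set.indicator_of_mem, h, Set.indicator_of_mem (show (s,u) ∈ {p : ℝ × ℝ | p.2 ≤ p.1} from h)]
      · simp [hH, Set.indicator_of_notMem, h,
          Set.indicator_of_notMem (show (s,u) ∉ {p : ℝ × ℝ | p.2 ≤ p.1} from h)]
    simp_rw [h1]
    rw [setIntegral_indicator measurableSet_Iic]
    have h2 : Ioc (0:ℝ) t ∩ Iic s = Ioc 0 s := by
      rw [Set.Ioc_inter_Iic, min_eq_right hs.2]
    rw [h2, integral_mul_const]
  have hR : ∫ u in Ioc (0:ℝ) t, ∫ s in Ioc (0:ℝ) t, H s u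
      = ∫ u in Ioc (0:ℝ) t, f u * (∫ s in Ioc u t, φ s) := by
    refine setIntegral_congr_fun measurableSet_Ioc (fun u hu => ?_)
    have h1 : ∀ s, H s u = (Ici u).indicator (fun s => f u * φ s) s := by
      intro s
      by_cases h : u ≤ s
      · simp [hH, Set.indicator_of_mem (show s ∈ Ici u from h),
          Set.indicator_of_mem (show (s,u) ∈ {p : ℝ × ℝ | p.2 ≤ p.1} from h)]
      · simp [hH, Set.indicator_of_notMem (show s ∉ Ici u from h),
          Set.indicator_of_notMem (show (s,u) ∉ {p : ℝ × ℝ | p.2 ≤ p.1} from h)]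
    simp_rw [h1]
    rw [setIntegral_indicator measurableSet_Ici]
    have h2 : Ioc (0:ℝ) t ∩ Ici u = Icc u t := by
      ext s
      constructor
      · rintro ⟨⟨_, hs2⟩, hs3⟩
        exact ⟨hs3, hs2⟩
      · rintro ⟨hs1, hs2⟩
        exact ⟨⟨lt_of_lt_of_le hu.1 hs1, hs2⟩, hs1⟩
    rw [h2, MeasureTheory.integral_Icc_eq_integral_Ioc, integral_const_mul]
  rw [hL, hswap, hR]

theorem stmt_16 {k : ℕ} (hk : 1 ≤ k) (ℓ μ θ : Fin k → ℝ)
    (hμ : ∀ i, 0 < μ i) (hθ : ∀ i, 0 ≤ θ i) :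
    ∃ c > (0:ℝ),
      ∀ (x : Fin k → ℝ) (w : ℝ → Fin k → ℝ), ContinuousOn w (Ici 0) → w 0 = 0 →
      ∀ (X Ψ : ℝ → Fin k → ℝ), ContinuousOn X (Ici 0) →
        (∀ i, ∀ t : ℝ, IntervalIntegrable (fun s => Ψ s i) volume 0 t) →
        (∀ t ≥ (0:ℝ), ∀ i, Ψ t i ≤ X t i) →
        (∀ t ≥ (0:ℝ), ∑ i, Ψ t i = min 0 (∑ i, X t i)) →
        (∀ t ≥ (0:ℝ), ∀ i, X t i = x i + w t i +
          ∫ s in (0:ℝ)..t, (-θ i * X s i - (μ i - θ i) * Ψ s i + ℓ i)) →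
      ∀ (Υ : ℝ → Fin k → ℝ), ContinuousOn Υ (Ici 0) →
        (∀ t ≥ (0:ℝ), ∀ i, Υ t i = x i + w t i +
          ∫ s in (0:ℝ)..t, (-μ i * Υ s i + ℓ i)) →
      ∀ t ≥ (0:ℝ),
        l1 (X t) ≤ c * (l1 x + l1 (w t) + t +
          (∫ s in (0:ℝ)..t, l1 (Υ s)) + l1 (Υ t)) := by
  classical
  set M : ℝ := 1 + ∑ i, |μ i - θ i| with hMdef
  have hM1 : 1 ≤ M := by
    have : (0:ℝ) ≤ ∑ i, |μ i - θ i| := Finset.sum_nonneg fun i _ => abs_nonneg _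
    linarith
  have hMi : ∀ i, |μ i - θ i| ≤ M := by
    intro i
    have h1 : |μ i - θ i| ≤ ∑ j, |μ j - θ j| :=
      Finset.single_le_sum (f := fun j => |μ j - θ j|) (fun j _ => abs_nonneg _)
        (Finset.mem_univ i)
    linarith
  refine ⟨M, by linarith, ?_⟩
  intro x w hwc hw0 X Ψ hXc hΨint hΨle hΨsum hXeq Υ hΥc hΥeq t ht
  -- component continuity
  have hXci : ∀ i, ContinuousOn (fun s => X s i) (Ici 0) :=
    fun i => (continuous_apply i).comp_continuousOn hXc
  have hΥci : ∀ i, ContinuousOn (fun s => Υ s i) (Ici 0) :=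
    fun i => (continuous_apply i).comp_continuousOn hΥc
  have hIcc : ∀ r : ℝ, 0 ≤ r → Icc (0:ℝ) r ⊆ Ici 0 := fun r _ y hy => hy.1
  have hXii : ∀ i, ∀ r, 0 ≤ r → IntervalIntegrable (fun s => X s i) volume 0 r := by
    intro i r hr
    apply ContinuousOn.intervalIntegrable
    rw [uIcc_of_le hr]
    exact (hXci i).mono (hIcc r hr)
  have hΥii : ∀ i, ∀ r, 0 ≤ r → IntervalIntegrable (fun s => Υ s i) volume 0 r := by
    intro i r hr
    apply ContinuousOn.intervalIntegrable
    rw [uIcc_of_le hr]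
    exact (hΥci i).mono (hIcc r hr)
  have hPii : ∀ i, ∀ r, 0 ≤ r → IntervalIntegrable (fun s => X s i - Ψ s i) volume 0 r :=
    fun i r hr => (hXii i r hr).sub (hΨint i r)
  have hePii : ∀ i, ∀ r, 0 ≤ r →
      IntervalIntegrable (fun s => Real.exp (μ i * s) * (X s i - Ψ s i)) volume 0 r := by
    intro i r hr
    exact (hPii i r hr).continuousOn_mul
      ((Real.continuous_exp.comp (continuous_const.mul continuous_id)).continuousOn)
  -- the auxiliary function A
  set A : Fin k → ℝ → ℝ := fun i r => Real.exp (-(μ i * r)) *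
      ∫ u in (0:ℝ)..r, Real.exp (μ i * u) * (X u i - Ψ u i) with hAdef
  have hA0 : ∀ i, ∀ r, 0 ≤ r → 0 ≤ A i r := by
    intro i r hr
    apply mul_nonneg (Real.exp_nonneg _)
    apply intervalIntegral.integral_nonneg hr
    intro u hu
    have := hΨle u hu.1
    have h1 := this i
    have h2 : (0:ℝ) ≤ X u i - Ψ u i := by linarith
    positivity
  -- continuity of A i on [0, r]
  have hAcont : ∀ i, ∀ r, 0 ≤ r → ContinuousOn (A i) (Icc 0 r) := by
    intro i r hr
    have hG : ContinuousOn (fun b => ∫ u in (0:ℝ)..b, Real.exp (μ i * u) * (X u i - Ψ u i))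
        (uIcc 0 r) :=
      intervalIntegral.continuousOn_primitive_interval' (hePii i r hr) left_mem_uIcc
    rw [uIcc_of_le hr] at hG
    have hexp : ContinuousOn (fun s => Real.exp (-(μ i * s))) (Icc 0 r) :=
      (Real.continuous_exp.comp (continuous_const.mul continuous_id).neg).continuousOn
    exact hexp.mul hG
  have hAii : ∀ i, ∀ r, 0 ≤ r → IntervalIntegrable (A i) volume 0 r := by
    intro i r hr
    apply ContinuousOn.intervalIntegrable
    rw [uIcc_of_le hr]
    exact hAcont i r hr
  -- the integral equation for Z = X - Υ
  have hZeq : ∀ i, ∀ r, 0 ≤ r → X r i - Υ r i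
      = ∫ s in (0:ℝ)..r, (-(μ i * (X s i - Υ s i)) + (μ i - θ i) * (X s i - Ψ s i)) := by
    intro i r hr
    have h1 := hXeq r hr i
    have h2 := hΥeq r hr i
    have e1 : IntervalIntegrable (fun s => -θ i * X s i - (μ i - θ i) * Ψ s i + ℓ i)
        volume 0 r := by
      apply IntervalIntegrable.add ?_ intervalIntegrable_const
      exact ((hXii i r hr).const_mul (-θ i)).sub ((hΨint i r).const_mul (μ i - θ i))
    have e2 : IntervalIntegrable (fun s => -μ i * Υ s i + ℓ i) volume 0 r := by
      apply IntervalIntegrable.add ?_ intervalIntegrable_const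
      exact (hΥii i r hr).const_mul (-μ i)
    have h3 : X r i - Υ r i
        = (∫ s in (0:ℝ)..r, (-θ i * X s i - (μ i - θ i) * Ψ s i + ℓ i))
          - ∫ s in (0:ℝ)..r, (-μ i * Υ s i + ℓ i) := by
      rw [h1, h2]; ring
    rw [h3, ← intervalIntegral.integral_sub e1 e2]
    apply intervalIntegral.integral_congr
    intro s _
    ring
  -- the key identity: X - Υ = (μ - θ) * A
  have key : ∀ i, ∀ r, 0 ≤ r → X r i - Υ r i = (μ i - θ i) * A i r := by
    intro i r hr
    set q : ℝ → ℝ := fun s => -(μ i * (X s i - Υ s i)) + (μ i - θ i) * (X s i - Ψ s i)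
      with hqdef
    have hqint : ∀ r', 0 ≤ r' → IntervalIntegrable q volume 0 r' := by
      intro r' hr'
      exact (((hXii i r' hr').sub (hΥii i r' hr')).const_mul (μ i)).neg.add
        ((hPii i r' hr').const_mul (μ i - θ i))
    have hswap := tri_swap (f := q) (φ := fun s => μ i * Real.exp (μ i * s)) hr
      ((hqint r hr).1)
      (continuous_const.mul (Real.continuous_exp.comp (continuous_const.mul continuous_id)))
    -- rewrite the left side
    have hL : ∫ s in Ioc (0:ℝ) r, (∫ u in Ioc (0:ℝ) s, q u) * (μ i * Real.exp (μ i * s))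
        = ∫ s in Ioc (0:ℝ) r, (X s i - Υ s i) * (μ i * Real.exp (μ i * s)) := by
      refine setIntegral_congr_fun measurableSet_Ioc (fun s hs => ?_)
      rw [← intervalIntegral.integral_of_le hs.1.le, ← hZeq i s hs.1.le]
    -- rewrite the right side
    have hR : ∫ u in Ioc (0:ℝ) r, q u * (∫ s in Ioc u r, μ i * Real.exp (μ i * s))
        = ∫ u in Ioc (0:ℝ) r, q u * (Real.exp (μ i * r) - Real.exp (μ i * u)) := by
      refine setIntegral_congr_fun measurableSet_Ioc (fun u hu => ?_)
      rw [← intervalIntegral.integral_of_le hu.2, exp_integral]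
    rw [hL, hR] at hswap
    -- integrabilities on Ioc 0 r
    have hq_on : IntegrableOn q (Ioc 0 r) := (hqint r hr).1
    have hZΥcont : ContinuousOn (fun s => X s i - Υ s i) (Ici 0) :=
      (hXci i).sub (hΥci i)
    have hq_exp_u : IntegrableOn (fun u => q u * Real.exp (μ i * u)) (Ioc 0 r) := by
      have : IntervalIntegrable (fun u => q u * Real.exp (μ i * u)) volume 0 r :=
        (hqint r hr).mul_continuousOn
          ((Real.continuous_exp.comp (continuous_const.mul continuous_id)).continuousOn)
      exact this.1
    have hZφ_on : IntegrableOn (fun s => (X s i - Υ s i) * (μ i * Real.exp (μ i * s)))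
        (Ioc 0 r) := by
      have : IntervalIntegrable (fun s => (X s i - Υ s i) * (μ i * Real.exp (μ i * s)))
          volume 0 r := by
        apply ContinuousOn.intervalIntegrable
        rw [uIcc_of_le hr]
        exact (hZΥcont.mono (hIcc r hr)).mul
          (continuous_const.mul
            (Real.continuous_exp.comp (continuous_const.mul continuous_id))).continuousOn
      exact this.1
    -- expand the right side of hswap
    have hexpand : ∫ u in Ioc (0:ℝ) r, q u * (Real.exp (μ i * r) - Real.exp (μ i * u))
        = (X r i - Υ r i) * Real.exp (μ i * r)
          - ∫ u in Ioc (0:ℝ) r, q u * Real.exp (μ i * u) := by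
      have h1 : (fun u => q u * (Real.exp (μ i * r) - Real.exp (μ i * u)))
          = fun u => q u * Real.exp (μ i * r) - q u * Real.exp (μ i * u) := by
        funext u; ring
      rw [h1, integral_sub (hq_on.mul_const _) hq_exp_u, integral_mul_const]
      congr 1
      rw [← intervalIntegral.integral_of_le hr, ← hZeq i r hr]
    rw [hexpand] at hswap
    -- combine
    have hcomb : ∫ s in Ioc (0:ℝ) r,
        ((X s i - Υ s i) * (μ i * Real.exp (μ i * s)) + q s * Real.exp (μ i * s))
        = (X r i - Υ r i) * Real.exp (μ i * r) := by
      rw [integral_add hZφ_on hq_exp_u]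
      linarith [hswap]
    have hcongr : ∫ s in Ioc (0:ℝ) r,
        ((X s i - Υ s i) * (μ i * Real.exp (μ i * s)) + q s * Real.exp (μ i * s))
        = ∫ s in Ioc (0:ℝ) r, (μ i - θ i) * (Real.exp (μ i * s) * (X s i - Ψ s i)) := by
      refine setIntegral_congr_fun measurableSet_Ioc (fun s _ => ?_)
      simp only [hqdef]
      ring
    rw [hcongr] at hcomb
    rw [integral_const_mul, ← intervalIntegral.integral_of_le hr] at hcomb
    -- finish: multiply by exp(-(μ i * r))
    have hexp_ne : Real.exp (μ i * r) ≠ 0 := Real.exp_ne_zero _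
    have : A i r = Real.exp (-(μ i * r)) *
        ∫ u in (0:ℝ)..r, Real.exp (μ i * u) * (X u i - Ψ u i) := rfl
    rw [this]
    have hee : Real.exp (-(μ i * r)) * Real.exp (μ i * r) = 1 := by
      rw [← Real.exp_add]; simp
    calc X r i - Υ r i
        = ((X r i - Υ r i) * Real.exp (μ i * r)) * Real.exp (-(μ i * r)) := by
          rw [mul_assoc, mul_comm (Real.exp (μ i * r)), hee, mul_one]
      _ = ((μ i - θ i) * ∫ u in (0:ℝ)..r, Real.exp (μ i * u) * (X u i - Ψ u i))
            * Real.exp (-(μ i * r)) := by rw [hcomb]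
      _ = (μ i - θ i) * (Real.exp (-(μ i * r)) *
            ∫ u in (0:ℝ)..r, Real.exp (μ i * u) * (X u i - Ψ u i)) := by ring
  -- the ODE satisfied by A
  have hAode : ∀ i, ∀ r, 0 ≤ r →
      A i r = ∫ s in (0:ℝ)..r, ((X s i - Ψ s i) - μ i * A i s) := by
    intro i r hr
    have hswap := tri_swap (f := fun u => Real.exp (μ i * u) * (X u i - Ψ u i))
      (φ := fun s => μ i * Real.exp (-(μ i * s))) hr ((hePii i r hr).1)
      (continuous_const.mul (Real.continuous_exp.comp (continuous_const.mul continuous_id).neg))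
    -- left side is ∫ μ A
    have hL : ∫ s in Ioc (0:ℝ) r,
        (∫ u in Ioc (0:ℝ) s, Real.exp (μ i * u) * (X u i - Ψ u i))
          * (μ i * Real.exp (-(μ i * s)))
        = ∫ s in Ioc (0:ℝ) r, μ i * A i s := by
      refine setIntegral_congr_fun measurableSet_Ioc (fun s hs => ?_)
      rw [← intervalIntegral.integral_of_le hs.1.le]
      simp only [hAdef]
      ring
    -- inner integral of φ
    have hR : ∫ u in Ioc (0:ℝ) r,
        Real.exp (μ i * u) * (X u i - Ψ u i) * (∫ s in Ioc u r, μ i * Real.exp (-(μ i * s)))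
        = ∫ u in Ioc (0:ℝ) r, Real.exp (μ i * u) * (X u i - Ψ u i)
            * (Real.exp (-(μ i * u)) - Real.exp (-(μ i * r))) := by
      refine setIntegral_congr_fun measurableSet_Ioc (fun u hu => ?_)
      congr 1
      rw [← intervalIntegral.integral_of_le hu.2]
      have h1 := exp_integral (-(μ i)) u r
      have h2 : ∀ s : ℝ, -(μ i) * Real.exp (-(μ i) * s) = -(μ i * Real.exp (-(μ i * s))) := by
        intro s; rw [neg_mul, neg_mul]
      rw [intervalIntegral.integral_congr (g := fun s => -(μ i * Real.exp (-(μ i * s))))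
        (fun s _ => h2 s)] at h1
      rw [intervalIntegral.integral_neg] at h1
      have h3 : ∫ s in u..r, μ i * Real.exp (-(μ i * s))
          = -(Real.exp (-(μ i) * r) - Real.exp (-(μ i) * u)) := by linarith
      rw [h3]; rw [neg_mul, neg_mul]; ring
    rw [hL, hR] at hswap
    -- expand the right side
    have hP_on : IntegrableOn (fun u => X u i - Ψ u i) (Ioc 0 r) := (hPii i r hr).1
    have heP_on : IntegrableOn (fun u => Real.exp (μ i * u) * (X u i - Ψ u i)) (Ioc 0 r) :=
      (hePii i r hr).1
    have hsplit : ∫ u in Ioc (0:ℝ) r, Real.exp (μ i * u) * (X u i - Ψ u i)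
          * (Real.exp (-(μ i * u)) - Real.exp (-(μ i * r)))
        = (∫ u in Ioc (0:ℝ) r, (X u i - Ψ u i)) - A i r := by
      have h1 : (fun u => Real.exp (μ i * u) * (X u i - Ψ u i)
            * (Real.exp (-(μ i * u)) - Real.exp (-(μ i * r))))
          = fun u => (X u i - Ψ u i)
            - (Real.exp (μ i * u) * (X u i - Ψ u i)) * Real.exp (-(μ i * r)) := by
        funext u
        have hee : Real.exp (μ i * u) * Real.exp (-(μ i * u)) = 1 := by
          rw [← Real.exp_add]; simp
        calc Real.exp (μ i * u) * (X u i - Ψ u i)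
              * (Real.exp (-(μ i * u)) - Real.exp (-(μ i * r)))
            = (Real.exp (μ i * u) * Real.exp (-(μ i * u))) * (X u i - Ψ u i)
              - (Real.exp (μ i * u) * (X u i - Ψ u i)) * Real.exp (-(μ i * r)) := by ring
          _ = (X u i - Ψ u i)
              - (Real.exp (μ i * u) * (X u i - Ψ u i)) * Real.exp (-(μ i * r)) := by
              rw [hee, one_mul]
      rw [h1, integral_sub hP_on (heP_on.mul_const _), integral_mul_const]
      congr 1
      simp only [hAdef]
      rw [← intervalIntegral.integral_of_le hr]
      ring
    rw [hsplit] at hswap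
    -- conclude
    have hμA_on : IntegrableOn (fun s => μ i * A i s) (Ioc 0 r) :=
      ((hAii i r hr).const_mul (μ i)).1
    rw [intervalIntegral.integral_of_le hr,
      integral_sub hP_on hμA_on]
    linarith [hswap]
  -- nonnegativity of l1 and the integral
  have hl1 : ∀ v : Fin k → ℝ, 0 ≤ l1 v := fun v => Finset.sum_nonneg fun i _ => abs_nonneg _
  have hl1cont : Continuous (l1 : (Fin k → ℝ) → ℝ) :=
    continuous_finset_sum _ fun i _ => (continuous_apply i).abs
  have hl1Υii : IntervalIntegrable (fun s => l1 (Υ s)) volume 0 t := by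
    apply ContinuousOn.intervalIntegrable
    rw [uIcc_of_le ht]
    exact (hl1cont.comp_continuousOn hΥc).mono (hIcc t ht)
  -- the summed bound:  ∑ A i t ≤ ∫ l1 (Υ s)
  have hsumA : ∑ i, A i t ≤ ∫ s in (0:ℝ)..t, l1 (Υ s) := by
    have hfii : ∀ i ∈ Finset.univ,
        IntervalIntegrable (fun s => (X s i - Ψ s i) - μ i * A i s) volume 0 t :=
      fun i _ => (hPii i t ht).sub ((hAii i t ht).const_mul (μ i))
    have h1 : ∑ i, A i t
        = ∫ s in (0:ℝ)..t, ∑ i, ((X s i - Ψ s i) - μ i * A i s) := by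
      rw [intervalIntegral.integral_finset_sum hfii]
      exact Finset.sum_congr rfl fun i _ => hAode i t ht
    rw [h1]
    have hsumii : IntervalIntegrable
        (fun s => ∑ i, ((X s i - Ψ s i) - μ i * A i s)) volume 0 t := by
      have h := IntervalIntegrable.sum (μ := volume) Finset.univ hfii
      simpa [Finset.sum_fn] using h
    apply intervalIntegral.integral_mono_on ht hsumii hl1Υii
    intro s hs
    have hs0 : (0:ℝ) ≤ s := hs.1
    -- pointwise bound
    have hPsum : ∑ i, (X s i - Ψ s i) = ∑ i, X s i - min 0 (∑ i, X s i) := by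
      rw [Finset.sum_sub_distrib, hΨsum s hs0]
    have hXsum_le : ∑ i, X s i ≤ l1 (Υ s) + ∑ i, μ i * A i s := by
      have h2 : ∀ i, X s i = Υ s i + (μ i - θ i) * A i s := by
        intro i
        have := key i s hs0
        linarith
      calc ∑ i, X s i = ∑ i, (Υ s i + (μ i - θ i) * A i s) :=
            Finset.sum_congr rfl fun i _ => h2 i
        _ = ∑ i, Υ s i + ∑ i, (μ i - θ i) * A i s := Finset.sum_add_distrib
        _ ≤ ∑ i, |Υ s i| + ∑ i, μ i * A i s := by
            apply add_le_add
            · exact Finset.sum_le_sum fun i _ => le_abs_self _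
            · refine Finset.sum_le_sum fun i _ => ?_
              apply mul_le_mul_of_nonneg_right _ (hA0 i s hs0)
              linarith [hθ i]
        _ = l1 (Υ s) + ∑ i, μ i * A i s := rfl
    have hRHSnn : 0 ≤ l1 (Υ s) + ∑ i, μ i * A i s := by
      apply add_nonneg (hl1 _)
      exact Finset.sum_nonneg fun i _ => mul_nonneg (hμ i).le (hA0 i s hs0)
    have hmain : ∑ i, (X s i - Ψ s i) ≤ l1 (Υ s) + ∑ i, μ i * A i s := by
      rw [hPsum]
      rcases le_or_gt 0 (∑ i, X s i) with h | h
      · rw [min_eq_left h]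
        simpa using hXsum_le
      · rw [min_eq_right h.le]
        simpa using hRHSnn
    have : ∑ i, ((X s i - Ψ s i) - μ i * A i s)
        = ∑ i, (X s i - Ψ s i) - ∑ i, μ i * A i s := Finset.sum_sub_distrib _ _
    rw [this]
    linarith
  -- final assembly
  have hintnn : 0 ≤ ∫ s in (0:ℝ)..t, l1 (Υ s) :=
    intervalIntegral.integral_nonneg ht fun s _ => hl1 _
  have hfinal : l1 (X t) ≤ l1 (Υ t) + M * ∑ i, A i t := by
    have h1 : ∀ i, |X t i| ≤ |Υ t i| + M * A i t := by
      intro i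
      have h2 : X t i = Υ t i + (μ i - θ i) * A i t := by
        have := key i t ht
        linarith
      have h3 : |X t i| ≤ |Υ t i| + |(μ i - θ i) * A i t| := by
        rw [h2]; exact abs_add_le _ _
      have h4 : |(μ i - θ i) * A i t| = |μ i - θ i| * A i t := by
        rw [abs_mul, abs_of_nonneg (hA0 i t ht)]
      have h5 : |μ i - θ i| * A i t ≤ M * A i t :=
        mul_le_mul_of_nonneg_right (hMi i) (hA0 i t ht)
      linarith
    calc l1 (X t) = ∑ i, |X t i| := rfl
      _ ≤ ∑ i, (|Υ t i| + M * A i t) := Finset.sum_le_sum fun i _ => h1 i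
      _ = ∑ i, |Υ t i| + ∑ i, M * A i t := Finset.sum_add_distrib
      _ = l1 (Υ t) + M * ∑ i, A i t := by rw [← Finset.mul_sum]; rfl
  have hMA : M * ∑ i, A i t ≤ M * ∫ s in (0:ℝ)..t, l1 (Υ s) :=
    mul_le_mul_of_nonneg_left hsumA (by linarith)
  have h6 : l1 (X t) ≤ l1 (Υ t) + M * ∫ s in (0:ℝ)..t, l1 (Υ s) := by linarith
  have h7 : (0:ℝ) ≤ l1 x := hl1 _
  have h8 : (0:ℝ) ≤ l1 (w t) := hl1 _
  have h9 : (0:ℝ) ≤ l1 (Υ t) := hl1 _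
  nlinarith [h6, h7, h8, h9, ht, hintnn, hM1]
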